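/- arXiv:1504.05115 — 2 statements merged into one kernel-verified Lean document; each statement's English description precedes it below -/
import Mathlib

section
/- The infimum of the transition energy ∫₀^∞ ((f(t)−1)² + (f''(t))²) dt, taken over all twice continuously differentiable functions f : ℝ → ℝ with f(0) = 0, f'(0) = 0, and such that there exists M > 0 with f(t) = 1 for all t > M, equals √2. -/
open MeasureTheory Real

noncomputable section

def rr : ℝ := (Real.sqrt 2)⁻¹
def g0 (t : ℝ) : ℝ := -(Real.exp (-(rr*t)) * (Real.cos (rr*t) + Real.sin (rr*t)))
def g1 (t : ℝ) : ℝ := Real.sqrt 2 * (Real.exp (-(rr*t)) * Real.sin (rr*t))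
def g2 (t : ℝ) : ℝ := Real.exp (-(rr*t)) * (Real.cos (rr*t) - Real.sin (rr*t))
def g3 (t : ℝ) : ℝ := -(Real.sqrt 2 * (Real.exp (-(rr*t)) * Real.cos (rr*t)))

lemma s2pos : (0:ℝ) < Real.sqrt 2 := Real.sqrt_pos.2 (by norm_num)
lemma s2sq : Real.sqrt 2 * Real.sqrt 2 = 2 := Real.mul_self_sqrt (by norm_num)
lemma rrs2 : Real.sqrt 2 * rr = 1 := mul_inv_cancel₀ (ne_of_gt s2pos)
lemma two_rr : 2 * rr = Real.sqrt 2 := by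
  rw [rr, mul_inv_eq_iff_eq_mul₀ (ne_of_gt s2pos)]; exact s2sq.symm
lemma rrpos : (0:ℝ) < rr := inv_pos.2 s2pos
lemma rrle : rr ≤ 1 := by
  rw [rr]; rw [inv_le_one_iff₀]; right; nlinarith [s2sq, s2pos]

lemma he' (t : ℝ) : HasDerivAt (fun t : ℝ => Real.exp (-(rr*t))) (-rr * Real.exp (-(rr*t))) t := by
  have h : HasDerivAt (fun t : ℝ => -(rr*t)) (-rr) t := by
    simpa using ((hasDerivAt_id t).const_mul rr).fun_neg
  simpa [mul_comm] using h.exp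
lemma hcos' (t : ℝ) : HasDerivAt (fun t : ℝ => Real.cos (rr*t)) (-rr * Real.sin (rr*t)) t := by
  have h : HasDerivAt (fun t : ℝ => rr*t) rr t := by simpa using (hasDerivAt_id t).const_mul rr
  simpa [mul_comm] using h.cos
lemma hsin' (t : ℝ) : HasDerivAt (fun t : ℝ => Real.sin (rr*t)) (rr * Real.cos (rr*t)) t := by
  have h : HasDerivAt (fun t : ℝ => rr*t) rr t := by simpa using (hasDerivAt_id t).const_mul rr
  simpa [mul_comm] using h.sin

lemma hg0 (t : ℝ) : HasDerivAt g0 (g1 t) t := by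
  have := ((he' t).fun_mul ((hcos' t).fun_add (hsin' t))).fun_neg
  refine this.congr_deriv ?_
  rw [g1, ← two_rr]; ring
lemma hg1 (t : ℝ) : HasDerivAt g1 (g2 t) t := by
  have := (((he' t).fun_mul (hsin' t)).const_mul (Real.sqrt 2))
  refine this.congr_deriv ?_
  rw [g2]
  have h1 := rrs2
  have : Real.sqrt 2 * (-rr * Real.exp (-(rr*t)) * Real.sin (rr*t) + Real.exp (-(rr*t)) * (rr * Real.cos (rr*t)))
      = (Real.sqrt 2 * rr) * (Real.exp (-(rr*t)) * (Real.cos (rr*t) - Real.sin (rr*t))) := by ring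
  rw [this, h1, one_mul]
lemma hg2 (t : ℝ) : HasDerivAt g2 (g3 t) t := by
  have := ((he' t).fun_mul ((hcos' t).fun_sub (hsin' t)))
  refine this.congr_deriv ?_
  rw [g3, ← two_rr]; ring

lemma g_ode (t : ℝ) : g2 t + Real.sqrt 2 * g1 t + g0 t = 0 := by
  rw [g0, g1, g2, ← mul_assoc, s2sq]; ring

lemma exp_bound_aux (t : ℝ) : |Real.exp (-(rr*t))| = Real.exp (-(rr*t)) := abs_of_pos (Real.exp_pos _)

lemma s2le2 : Real.sqrt 2 ≤ 2 := by nlinarith [s2sq, s2pos]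

lemma g0_bound (t : ℝ) : |g0 t| ≤ 2 * Real.exp (-(rr*t)) := by
  rw [g0, abs_neg, abs_mul, exp_bound_aux]
  have : |Real.cos (rr*t) + Real.sin (rr*t)| ≤ 2 := by
    calc |Real.cos (rr*t) + Real.sin (rr*t)| ≤ |Real.cos (rr*t)| + |Real.sin (rr*t)| := abs_add_le _ _
    _ ≤ 1 + 1 := add_le_add (Real.abs_cos_le_one _) (Real.abs_sin_le_one _)
    _ = 2 := by norm_num
  nlinarith [Real.exp_pos (-(rr*t))]
lemma g1_bound (t : ℝ) : |g1 t| ≤ 2 * Real.exp (-(rr*t)) := by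
  rw [g1, abs_mul, abs_mul, exp_bound_aux, abs_of_pos s2pos]
  calc Real.sqrt 2 * (Real.exp (-(rr*t)) * |Real.sin (rr*t)|)
      ≤ 2 * (Real.exp (-(rr*t)) * |Real.sin (rr*t)|) := by
        apply mul_le_mul_of_nonneg_right s2le2
        positivity
    _ ≤ 2 * (Real.exp (-(rr*t)) * 1) := by
        apply mul_le_mul_of_nonneg_left _ (by norm_num)
        exact mul_le_mul_of_nonneg_left (Real.abs_sin_le_one _) (le_of_lt (Real.exp_pos _))
    _ = 2 * Real.exp (-(rr*t)) := by ring
lemma g2_bound (t : ℝ) : |g2 t| ≤ 2 * Real.exp (-(rr*t)) := by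
  rw [g2, abs_mul, exp_bound_aux]
  have : |Real.cos (rr*t) - Real.sin (rr*t)| ≤ 2 := by
    calc |Real.cos (rr*t) - Real.sin (rr*t)| ≤ |Real.cos (rr*t)| + |Real.sin (rr*t)| := abs_sub _ _
    _ ≤ 2 := by nlinarith [Real.abs_cos_le_one (rr*t), Real.abs_sin_le_one (rr*t)]
  nlinarith [Real.exp_pos (-(rr*t))]

lemma aux_cd : ContDiff ℝ 2 (fun t : ℝ => rr * t) := contDiff_const.mul contDiff_id
lemma g0_contDiff : ContDiff ℝ 2 g0 := by
  unfold g0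
  exact ((Real.contDiff_exp.comp aux_cd.neg).mul
    ((Real.contDiff_cos.comp aux_cd).add (Real.contDiff_sin.comp aux_cd))).neg

lemma s2sq' : Real.sqrt 2 * Real.sqrt 2 = 2 := Real.mul_self_sqrt (by norm_num)

lemma cd2_facts {f : ℝ → ℝ} (hf : ContDiff ℝ 2 f) :
    (∀ t, HasDerivAt f (deriv f t) t) ∧ (∀ t, HasDerivAt (deriv f) (deriv (deriv f) t) t) ∧
    Continuous f ∧ Continuous (deriv f) ∧ Continuous (deriv (deriv f)) := by
  have heq : (2 : WithTop ℕ∞) = 1 + 1 := by norm_num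
  rw [heq] at hf
  have hd : Differentiable ℝ f := hf.differentiable (by norm_num)
  have hf1 : ContDiff ℝ 1 (deriv f) := (contDiff_succ_iff_deriv.mp hf).2.2
  have hd1 : Differentiable ℝ (deriv f) := hf1.differentiable one_ne_zero
  have hc2 : Continuous (deriv (deriv f)) := (contDiff_one_iff_deriv.mp hf1).2
  exact ⟨fun t => (hd t).hasDerivAt, fun t => (hd1 t).hasDerivAt, hf.continuous,
    hf1.continuous, hc2⟩

lemma vanish_beyond {f : ℝ → ℝ} {M : ℝ} (hfM : ∀ t > M, f t = 1) :
    ∀ t > M, f t - 1 = 0 ∧ deriv f t = 0 ∧ deriv (deriv f) t = 0 := by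
  have h1 : ∀ t > M, deriv f t = 0 := by
    intro t ht
    have hev : f =ᶠ[nhds t] (fun _ => 1) :=
      Filter.eventuallyEq_of_mem (Ioi_mem_nhds ht) (fun s hs => hfM s hs)
    rw [hev.deriv_eq, deriv_const]
  have h2 : ∀ t > M, deriv (deriv f) t = 0 := by
    intro t ht
    have hev : deriv f =ᶠ[nhds t] (fun _ => 0) :=
      Filter.eventuallyEq_of_mem (Ioi_mem_nhds ht) (fun s hs => h1 s hs)
    rw [hev.deriv_eq, deriv_const]
  exact fun t ht => ⟨by rw [hfM t ht]; ring, h1 t ht, h2 t ht⟩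

lemma integrableOn_of_supported {u : ℝ → ℝ} {M : ℝ} (hu : Continuous u)
    (h : ∀ t > M, u t = 0) (hM : 0 < M) : IntegrableOn u (Set.Ioi 0) := by
  have h1 : IntegrableOn u (Set.Ioc 0 M) := hu.integrableOn_Ioc
  have h2 : IntegrableOn u (Set.Ioi M) := by
    apply (integrableOn_congr_fun (g := fun _ => (0:ℝ)) ?_ measurableSet_Ioi).mpr
    · exact integrableOn_zero
    · exact fun t ht => h t ht
  have := h1.union h2
  rwa [Set.Ioc_union_Ioi_eq_Ioi (le_of_lt hM)] at this

lemma setIntegral_zero_of_supported {u : ℝ → ℝ} {M : ℝ} (h : ∀ t > M, u t = 0) :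
    ∫ t in Set.Ioi M, u t = 0 := by
  rw [setIntegral_congr_fun measurableSet_Ioi (fun t ht => h t ht)]
  simp

lemma cont_zero_at {u : ℝ → ℝ} {M : ℝ} (hu : Continuous u) (h : ∀ t > M, u t = 0) :
    u M = 0 := by
  have h1 : Filter.Tendsto u (nhdsWithin M (Set.Ioi M)) (nhds (u M)) :=
    (hu.continuousAt).continuousWithinAt.tendsto
  have h2 : Filter.Tendsto u (nhdsWithin M (Set.Ioi M)) (nhds 0) := by
    apply Filter.Tendsto.congr' ?_ tendsto_const_nhds
    filter_upwards [self_mem_nhdsWithin] with t ht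
    exact (h t ht).symm
  exact tendsto_nhds_unique h1 h2

lemma energy_identity (f : ℝ → ℝ) (hf : ContDiff ℝ 2 f) (h0 : f 0 = 0) (h1 : deriv f 0 = 0)
    (M : ℝ) (hM : 0 < M) (hfM : ∀ t > M, f t = 1) :
    (∫ t in Set.Ioi (0:ℝ), ((f t - 1)^2 + (deriv (deriv f) t)^2))
      = Real.sqrt 2 + ∫ t in Set.Ioi (0:ℝ),
          (deriv (deriv f) t + Real.sqrt 2 * deriv f t + (f t - 1))^2 := by
  obtain ⟨hD1, hD2, hc0, hc1, hc2⟩ := cd2_facts hf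
  set F1 := deriv f with hF1
  set F2 := deriv (deriv f) with hF2
  have hvan := vanish_beyond hfM
  set V : ℝ → ℝ := fun t => 2*(f t - 1)*F1 t + Real.sqrt 2*(f t - 1)^2 + Real.sqrt 2*(F1 t)^2
    with hV
  set D : ℝ → ℝ := fun t => 2*(F1 t)^2 + 2*(f t - 1)*F2 t + 2*Real.sqrt 2*(f t - 1)*F1 t
    + 2*Real.sqrt 2*F1 t*F2 t with hD
  have hVderiv : ∀ t, HasDerivAt V (D t) t := by
    intro t
    have h := ((((hD1 t).sub_const 1).const_mul 2).fun_mul (hD2 t)).fun_add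
      ((((hD1 t).sub_const 1).fun_pow 2).const_mul (Real.sqrt 2)) |>.fun_add
      (((hD2 t).fun_pow 2).const_mul (Real.sqrt 2))
    refine h.congr_deriv ?_
    simp only [hD]
    ring
  have hpt : ∀ t, (F2 t + Real.sqrt 2 * F1 t + (f t - 1))^2
      = ((f t - 1)^2 + (F2 t)^2) + D t := by
    intro t
    simp only [hD]
    linear_combination (F1 t)^2 * s2sq'
  -- D is continuous, supported in (0, M]
  have hDcont : Continuous D := by
    simp only [hD]; fun_prop
  have hDzero : ∀ t > M, D t = 0 := by
    intro t ht
    obtain ⟨e0, e1, e2⟩ := hvan t ht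
    rw [← hF1] at e1; rw [← hF2] at e2
    simp only [hD, e0, e1, e2]; ring
  have hsqcont : Continuous (fun t => (F2 t + Real.sqrt 2 * F1 t + (f t - 1))^2) := by
    fun_prop
  have hsqzero : ∀ t > M, (F2 t + Real.sqrt 2 * F1 t + (f t - 1))^2 = 0 := by
    intro t ht
    obtain ⟨e0, e1, e2⟩ := hvan t ht
    rw [← hF1] at e1; rw [← hF2] at e2
    rw [e0, e1, e2]; ring
  have hEcont : Continuous (fun t => (f t - 1)^2 + (F2 t)^2) := by fun_prop
  have hEzero : ∀ t > M, (f t - 1)^2 + (F2 t)^2 = 0 := by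
    intro t ht
    obtain ⟨e0, _, e2⟩ := hvan t ht
    rw [← hF2] at e2
    rw [e0, e2]; ring
  have hDint : IntegrableOn D (Set.Ioi 0) := integrableOn_of_supported hDcont hDzero hM
  have hsqint : IntegrableOn (fun t => (F2 t + Real.sqrt 2 * F1 t + (f t - 1))^2) (Set.Ioi 0) :=
    integrableOn_of_supported hsqcont hsqzero hM
  -- ∫ D over Ioi 0 = -√2
  have hsplit : (∫ t in Set.Ioi (0:ℝ), D t)
      = (∫ t in Set.Ioc (0:ℝ) M, D t) + ∫ t in Set.Ioi M, D t := by
    rw [← setIntegral_union (Set.Ioc_disjoint_Ioi le_rfl) measurableSet_Ioi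
      (hDint.mono_set (by intro x hx; exact hx.1)) (hDint.mono_set (by
        intro x hx; exact lt_trans hM hx))]
    rw [Set.Ioc_union_Ioi_eq_Ioi (le_of_lt hM)]
  have hIoc : (∫ t in Set.Ioc (0:ℝ) M, D t) = V M - V 0 := by
    rw [← intervalIntegral.integral_of_le (le_of_lt hM)]
    exact intervalIntegral.integral_eq_sub_of_hasDerivAt (fun x _ => hVderiv x)
      (hDcont.intervalIntegrable 0 M)
  have hVM : V M = 0 := by
    have e0 : f M - 1 = 0 := cont_zero_at (M := M) (u := fun t => f t - 1) (by fun_prop) (fun t ht => (hvan t ht).1)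
    have e1 : F1 M = 0 := cont_zero_at (M := M) hc1 (fun t ht => (hvan t ht).2.1)
    simp only [hV, e0, e1]; ring
  have hV0 : V 0 = Real.sqrt 2 := by
    simp only [hV, h0, ← hF1, h1]
    ring
  have hDval : (∫ t in Set.Ioi (0:ℝ), D t) = -Real.sqrt 2 := by
    rw [hsplit, hIoc, hVM, hV0, setIntegral_zero_of_supported hDzero]; ring
  calc (∫ t in Set.Ioi (0:ℝ), ((f t - 1)^2 + (F2 t)^2))
      = ∫ t in Set.Ioi (0:ℝ), ((F2 t + Real.sqrt 2 * F1 t + (f t - 1))^2 - D t) := by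
        congr 1; funext t; rw [hpt t]; ring
    _ = (∫ t in Set.Ioi (0:ℝ), (F2 t + Real.sqrt 2 * F1 t + (f t - 1))^2)
        - ∫ t in Set.Ioi (0:ℝ), D t := integral_sub hsqint hDint
    _ = Real.sqrt 2 + ∫ t in Set.Ioi (0:ℝ), (F2 t + Real.sqrt 2 * F1 t + (f t - 1))^2 := by
        rw [hDval]; ring

lemma g0_zero : g0 0 = -1 := by
  simp [g0]
lemma g1_zero : g1 0 = 0 := by
  simp [g1]














def ψ : ℝ → ℝ := Real.smoothTransition
def P1 : ℝ → ℝ := deriv ψ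
def P2 : ℝ → ℝ := deriv P1

lemma ψ_one : ∀ x ≥ (1:ℝ), ψ x = 1 := fun x hx => Real.smoothTransition.one_of_one_le hx
lemma ψ_zero : ∀ x ≤ (0:ℝ), ψ x = 0 := fun x hx => Real.smoothTransition.zero_of_nonpos hx
lemma ψ_contDiff {n : ℕ∞} : ContDiff ℝ n ψ := Real.smoothTransition.contDiff
lemma ψ_cd2 : ContDiff ℝ 2 ψ := by exact_mod_cast ψ_contDiff (n := 2)
lemma ψ_hasDeriv (x : ℝ) : HasDerivAt ψ (P1 x) x :=
  ((ψ_cd2.differentiable (by norm_num)) x).hasDerivAt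
lemma P1_cd1 : ContDiff ℝ 1 P1 := by
  have heq : (2 : WithTop ℕ∞) = 1 + 1 := by norm_num
  exact (contDiff_succ_iff_deriv.mp (by rw [← heq]; exact ψ_cd2)).2.2
lemma P1_hasDeriv (x : ℝ) : HasDerivAt P1 (P2 x) x :=
  ((P1_cd1.differentiable one_ne_zero) x).hasDerivAt
lemma P1_cont : Continuous P1 := P1_cd1.continuous
lemma P2_cont : Continuous P2 := (contDiff_one_iff_deriv.mp P1_cd1).2

lemma P1_high : ∀ x ≥ (1:ℝ), P1 x = 0 := by
  have hgt : ∀ x > (1:ℝ), P1 x = 0 := by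
    intro x hx
    have hev : ψ =ᶠ[nhds x] (fun _ => 1) :=
      Filter.eventuallyEq_of_mem (Ioi_mem_nhds hx)
        (fun s hs => Real.smoothTransition.one_of_one_le (le_of_lt hs))
    rw [P1, hev.deriv_eq, deriv_const]
  intro x hx
  rcases eq_or_lt_of_le hx with h | h
  · rw [← h]; exact cont_zero_at P1_cont hgt
  · exact hgt x h
lemma P1_low : ∀ x < (0:ℝ), P1 x = 0 := by
  intro x hx
  have hev : ψ =ᶠ[nhds x] (fun _ => 0) :=
    Filter.eventuallyEq_of_mem (Iio_mem_nhds hx)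
      (fun s hs => Real.smoothTransition.zero_of_nonpos (le_of_lt hs))
  rw [P1, hev.deriv_eq, deriv_const]
lemma P2_high : ∀ x ≥ (1:ℝ), P2 x = 0 := by
  have hgt : ∀ x > (1:ℝ), P2 x = 0 := by
    intro x hx
    have hev : P1 =ᶠ[nhds x] (fun _ => 0) :=
      Filter.eventuallyEq_of_mem (Ioi_mem_nhds hx) (fun s hs => P1_high s (le_of_lt hs))
    rw [P2, hev.deriv_eq, deriv_const]
  intro x hx
  rcases eq_or_lt_of_le hx with h | h
  · rw [← h]; exact cont_zero_at P2_cont hgt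
  · exact hgt x h
lemma P2_low : ∀ x < (0:ℝ), P2 x = 0 := by
  intro x hx
  have hev : P1 =ᶠ[nhds x] (fun _ => 0) :=
    Filter.eventuallyEq_of_mem (Iio_mem_nhds hx) (fun s hs => P1_low s hs)
  rw [P2, hev.deriv_eq, deriv_const]

-- the approximating profile
def fn (n : ℕ) (t : ℝ) : ℝ := 1 + g0 t * ψ ((n:ℝ) + 1 - t)
def fn1 (n : ℕ) (t : ℝ) : ℝ := g1 t * ψ ((n:ℝ) + 1 - t) - g0 t * P1 ((n:ℝ) + 1 - t)
def fn2 (n : ℕ) (t : ℝ) : ℝ := g2 t * ψ ((n:ℝ) + 1 - t) - 2 * g1 t * P1 ((n:ℝ) + 1 - t)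
  + g0 t * P2 ((n:ℝ) + 1 - t)

lemma inner_hasDeriv (n : ℕ) (t : ℝ) :
    HasDerivAt (fun t : ℝ => (n:ℝ) + 1 - t) (-1) t := by
  simpa using (hasDerivAt_id t).const_sub ((n:ℝ)+1)

lemma ψc_hasDeriv (n : ℕ) (t : ℝ) :
    HasDerivAt (fun t : ℝ => ψ ((n:ℝ) + 1 - t)) (-P1 ((n:ℝ)+1-t)) t := by
  simpa [Function.comp_def] using (ψ_hasDeriv ((n:ℝ)+1-t)).comp t (inner_hasDeriv n t)
lemma P1c_hasDeriv (n : ℕ) (t : ℝ) :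
    HasDerivAt (fun t : ℝ => P1 ((n:ℝ) + 1 - t)) (-P2 ((n:ℝ)+1-t)) t := by
  simpa [Function.comp_def] using (P1_hasDeriv ((n:ℝ)+1-t)).comp t (inner_hasDeriv n t)

lemma fn_hasDeriv (n : ℕ) (t : ℝ) : HasDerivAt (fn n) (fn1 n t) t := by
  have h := ((hg0 t).fun_mul (ψc_hasDeriv n t)).const_add 1
  refine h.congr_deriv ?_
  rw [fn1]; ring
lemma fn1_hasDeriv (n : ℕ) (t : ℝ) : HasDerivAt (fn1 n) (fn2 n t) t := by
  have h := ((hg1 t).fun_mul (ψc_hasDeriv n t)).fun_sub ((hg0 t).fun_mul (P1c_hasDeriv n t))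
  refine h.congr_deriv ?_
  rw [fn2]; ring

lemma fn_deriv (n : ℕ) : deriv (fn n) = fn1 n := funext fun t => (fn_hasDeriv n t).deriv
lemma fn_deriv2 (n : ℕ) : deriv (deriv (fn n)) = fn2 n := by
  rw [fn_deriv]; exact funext fun t => (fn1_hasDeriv n t).deriv

lemma fn_contDiff (n : ℕ) : ContDiff ℝ 2 (fn n) := by
  apply ContDiff.add contDiff_const
  apply g0_contDiff.mul
  exact ψ_cd2.comp ((contDiff_const).sub contDiff_id)

lemma fn_zero (n : ℕ) : fn n 0 = 0 := by
  rw [fn, sub_zero, g0_zero, ψ_one _ (by linarith [Nat.cast_nonneg (α := ℝ) n])]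
  ring

lemma fn_deriv_zero (n : ℕ) : deriv (fn n) 0 = 0 := by
  rw [fn_deriv, fn1, sub_zero, g1_zero, ψ_one ((n:ℝ)+1) (by linarith [Nat.cast_nonneg (α := ℝ) n]),
    P1_high _ (by linarith [Nat.cast_nonneg (α := ℝ) n]), g0_zero]
  ring

lemma fn_one (n : ℕ) : ∀ t > (n:ℝ)+1, fn n t = 1 := by
  intro t ht
  rw [fn, ψ_zero _ (by linarith)]
  ring

-- the residual h and its bounds
def hres (n : ℕ) (t : ℝ) : ℝ := fn2 n t + Real.sqrt 2 * fn1 n t + (fn n t - 1)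

lemma hres_eq (n : ℕ) (t : ℝ) : hres n t =
    ψ ((n:ℝ)+1-t) * (g2 t + Real.sqrt 2 * g1 t + g0 t)
    - P1 ((n:ℝ)+1-t) * (2 * g1 t + Real.sqrt 2 * g0 t) + P2 ((n:ℝ)+1-t) * g0 t := by
  rw [hres, fn2, fn1, fn]; ring

lemma hres_left (n : ℕ) : ∀ t ≤ (n:ℝ), hres n t = 0 := by
  intro t ht
  rw [hres_eq, g_ode, P1_high _ (by linarith), P2_high _ (by linarith)]
  ring
lemma hres_right (n : ℕ) : ∀ t > (n:ℝ)+1, hres n t = 0 := by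
  intro t ht
  rw [hres_eq, g_ode, P1_low _ (by linarith), P2_low _ (by linarith)]
  ring







lemma hres_cont (n : ℕ) : Continuous (hres n) := by
  obtain ⟨_, _, hc0, hc1, hc2⟩ := cd2_facts (fn_contDiff n)
  rw [fn_deriv] at hc1
  rw [fn_deriv2] at hc2
  unfold hres
  fun_prop

lemma hres_bound : ∃ K ≥ (0:ℝ), ∀ n : ℕ, ∀ t ∈ Set.Ioc (n:ℝ) ((n:ℝ)+1),
    |hres n t| ≤ K * Real.exp (-(rr*(n:ℝ))) := by
  obtain ⟨C1, hC1⟩ := isCompact_Icc.exists_bound_of_continuousOn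
    (s := Set.Icc (0:ℝ) 1) P1_cont.continuousOn
  obtain ⟨C2, hC2⟩ := isCompact_Icc.exists_bound_of_continuousOn
    (s := Set.Icc (0:ℝ) 1) P2_cont.continuousOn
  have hC1' : 0 ≤ C1 := le_trans (norm_nonneg _) (hC1 0 (by norm_num))
  have hC2' : 0 ≤ C2 := le_trans (norm_nonneg _) (hC2 0 (by norm_num))
  refine ⟨8*C1 + 2*C2, by linarith, fun n t ht => ?_⟩
  have hx : (n:ℝ)+1-t ∈ Set.Icc (0:ℝ) 1 := ⟨by linarith [ht.2], by linarith [ht.1]⟩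
  have hb1 : |P1 ((n:ℝ)+1-t)| ≤ C1 := by
    have := hC1 _ hx; rwa [Real.norm_eq_abs] at this
  have hb2 : |P2 ((n:ℝ)+1-t)| ≤ C2 := by
    have := hC2 _ hx; rwa [Real.norm_eq_abs] at this
  have hexp : Real.exp (-(rr*t)) ≤ Real.exp (-(rr*(n:ℝ))) := by
    apply Real.exp_le_exp.mpr
    have := ht.1
    nlinarith [rrpos]
  have hg0t := g0_bound t
  have hg1t := g1_bound t
  have hEpos := Real.exp_pos (-(rr*t))
  have hEpos' := Real.exp_pos (-(rr*(n:ℝ)))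
  rw [hres_eq, g_ode]
  calc |ψ ((n:ℝ)+1-t) * 0 - P1 ((n:ℝ)+1-t) * (2 * g1 t + Real.sqrt 2 * g0 t)
        + P2 ((n:ℝ)+1-t) * g0 t|
      ≤ |P1 ((n:ℝ)+1-t) * (2 * g1 t + Real.sqrt 2 * g0 t)| + |P2 ((n:ℝ)+1-t) * g0 t| := by
        rw [mul_zero, zero_sub, neg_add_eq_sub]
        calc |P2 ((n:ℝ)+1-t) * g0 t - P1 ((n:ℝ)+1-t) * (2 * g1 t + Real.sqrt 2 * g0 t)|
            ≤ |P2 ((n:ℝ)+1-t) * g0 t| + |P1 ((n:ℝ)+1-t) * (2 * g1 t + Real.sqrt 2 * g0 t)| :=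
              abs_sub _ _
          _ = _ := by ring
    _ ≤ C1 * (2 * (2*Real.exp (-(rr*t))) + Real.sqrt 2 * (2*Real.exp (-(rr*t))))
        + C2 * (2*Real.exp (-(rr*t))) := by
        rw [abs_mul, abs_mul]
        apply add_le_add
        · apply mul_le_mul hb1 ?_ (abs_nonneg _) hC1'
          calc |2 * g1 t + Real.sqrt 2 * g0 t| ≤ 2 * |g1 t| + Real.sqrt 2 * |g0 t| := by
                calc |2 * g1 t + Real.sqrt 2 * g0 t| ≤ |2 * g1 t| + |Real.sqrt 2 * g0 t| :=
                    abs_add_le _ _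
                  _ = 2 * |g1 t| + Real.sqrt 2 * |g0 t| := by
                    rw [abs_mul, abs_mul, abs_of_pos s2pos, abs_of_pos (by norm_num : (0:ℝ)<2)]
            _ ≤ 2 * (2*Real.exp (-(rr*t))) + Real.sqrt 2 * (2*Real.exp (-(rr*t))) := by
                apply add_le_add (by linarith) (mul_le_mul_of_nonneg_left hg0t (le_of_lt s2pos))
        · exact mul_le_mul hb2 hg0t (abs_nonneg _) hC2'
    _ ≤ (8*C1 + 2*C2) * Real.exp (-(rr*(n:ℝ))) := by
        have key1 : C1 * Real.exp (-(rr*t)) ≤ C1 * Real.exp (-(rr*(n:ℝ))) :=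
          mul_le_mul_of_nonneg_left hexp hC1'
        have key2 : C2 * Real.exp (-(rr*t)) ≤ C2 * Real.exp (-(rr*(n:ℝ))) :=
          mul_le_mul_of_nonneg_left hexp hC2'
        have key3 : Real.sqrt 2 * (C1 * Real.exp (-(rr*t)))
            ≤ Real.sqrt 2 * (C1 * Real.exp (-(rr*(n:ℝ)))) :=
          mul_le_mul_of_nonneg_left key1 (le_of_lt s2pos)
        have key4 : Real.sqrt 2 * (C1 * Real.exp (-(rr*(n:ℝ))))
            ≤ 2 * (C1 * Real.exp (-(rr*(n:ℝ)))) :=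
          mul_le_mul_of_nonneg_right s2le2 (mul_nonneg hC1' (le_of_lt hEpos'))
        nlinarith [key1, key2, key3, key4]

lemma hres_sq_int_eq (n : ℕ) : (∫ t in Set.Ioi (0:ℝ), (hres n t)^2)
    = ∫ t in Set.Ioc (n:ℝ) ((n:ℝ)+1), (hres n t)^2 := by
  have hz : ∀ x ∉ Set.Ioc (n:ℝ) ((n:ℝ)+1), (hres n x)^2 = 0 := by
    intro x hx
    rcases not_and_or.mp ((Set.mem_Ioc).not.mp hx) with h | h
    · rw [hres_left n x (le_of_not_gt h)]; ring
    · rw [hres_right n x (lt_of_not_ge h)]; ring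
  have hz' : ∀ x ∉ Set.Ioi (0:ℝ), (hres n x)^2 = 0 := by
    intro x hx
    rw [hres_left n x (le_trans (le_of_not_gt hx) (Nat.cast_nonneg n))]; ring
  rw [setIntegral_eq_integral_of_forall_compl_eq_zero hz',
    setIntegral_eq_integral_of_forall_compl_eq_zero hz]

lemma hres_sq_int_le {K : ℝ} (hK : 0 ≤ K)
    (hb : ∀ n : ℕ, ∀ t ∈ Set.Ioc (n:ℝ) ((n:ℝ)+1), |hres n t| ≤ K * Real.exp (-(rr*(n:ℝ))))
    (n : ℕ) : (∫ t in Set.Ioi (0:ℝ), (hres n t)^2)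
      ≤ (K * Real.exp (-(rr*(n:ℝ))))^2 := by
  rw [hres_sq_int_eq]
  have hsq : ∀ t ∈ Set.Ioc (n:ℝ) ((n:ℝ)+1), (hres n t)^2 ≤ (K * Real.exp (-(rr*(n:ℝ))))^2 := by
    intro t ht
    have := hb n t ht
    calc (hres n t)^2 = |hres n t|^2 := (sq_abs _).symm
      _ ≤ (K * Real.exp (-(rr*(n:ℝ))))^2 := by
          apply pow_le_pow_left₀ (abs_nonneg _) this
  calc (∫ t in Set.Ioc (n:ℝ) ((n:ℝ)+1), (hres n t)^2)
      ≤ ∫ _ in Set.Ioc (n:ℝ) ((n:ℝ)+1), (K * Real.exp (-(rr*(n:ℝ))))^2 := by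
        apply setIntegral_mono_on
        · exact ((hres_cont n).pow 2).integrableOn_Ioc
        · exact integrableOn_const measure_Ioc_lt_top.ne
        · exact measurableSet_Ioc
        · exact hsq
    _ = (K * Real.exp (-(rr*(n:ℝ))))^2 := by
        rw [setIntegral_const, Real.volume_real_Ioc]
        simp

/-- The infimum of the transition energy `∫₀^∞ ((f−1)² + (f'')²)` over all C²
functions with `f(0) = f'(0) = 0` that are identically `1` beyond some `M > 0`
equals `√2` (Theorem 3.1 of the paper). -/
theorem optimal_profile_infimum :
    sInf { E : ℝ | ∃ f : ℝ → ℝ, ContDiff ℝ 2 f ∧ f 0 = 0 ∧ deriv f 0 = 0 ∧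
        (∃ M > (0 : ℝ), ∀ t > M, f t = 1) ∧
        E = ∫ t in Set.Ioi (0 : ℝ),
          ((f t - 1) ^ 2 + (deriv (deriv f) t) ^ 2) } = Real.sqrt 2 := by
  set S := { E : ℝ | ∃ f : ℝ → ℝ, ContDiff ℝ 2 f ∧ f 0 = 0 ∧ deriv f 0 = 0 ∧
        (∃ M > (0 : ℝ), ∀ t > M, f t = 1) ∧
        E = ∫ t in Set.Ioi (0 : ℝ),
          ((f t - 1) ^ 2 + (deriv (deriv f) t) ^ 2) } with hS
  have hmem : ∀ n : ℕ, (∫ t in Set.Ioi (0:ℝ),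
      ((fn n t - 1) ^ 2 + (deriv (deriv (fn n)) t) ^ 2)) ∈ S := by
    intro n
    exact ⟨fn n, fn_contDiff n, fn_zero n, fn_deriv_zero n,
      ⟨(n:ℝ)+1, by positivity, fn_one n⟩, rfl⟩
  have hlb : ∀ E ∈ S, Real.sqrt 2 ≤ E := by
    rintro E ⟨f, hf, h0, h1, ⟨M, hM, hfM⟩, rfl⟩
    rw [energy_identity f hf h0 h1 M hM hfM]
    have : 0 ≤ ∫ t in Set.Ioi (0:ℝ),
        (deriv (deriv f) t + Real.sqrt 2 * deriv f t + (f t - 1))^2 :=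
      setIntegral_nonneg measurableSet_Ioi (fun t _ => sq_nonneg _)
    linarith
  have hne : S.Nonempty := ⟨_, hmem 0⟩
  have hbdd : BddBelow S := ⟨Real.sqrt 2, hlb⟩
  have hval : ∀ n : ℕ, (∫ t in Set.Ioi (0:ℝ),
      ((fn n t - 1) ^ 2 + (deriv (deriv (fn n)) t) ^ 2))
      = Real.sqrt 2 + ∫ t in Set.Ioi (0:ℝ), (hres n t)^2 := by
    intro n
    rw [energy_identity (fn n) (fn_contDiff n) (fn_zero n) (fn_deriv_zero n)
      ((n:ℝ)+1) (by positivity) (fn_one n)]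
    congr 1
    apply setIntegral_congr_fun measurableSet_Ioi
    intro t _
    simp only [fn_deriv]
    rw [(fn1_hasDeriv n t).deriv, hres]
  apply le_antisymm
  · by_contra hlt
    push_neg at hlt
    set ε := sInf S - Real.sqrt 2 with hε
    have hεpos : 0 < ε := by simp only [hε]; linarith
    obtain ⟨K, hK, hb⟩ := hres_bound
    set m := min 1 ε with hm
    have hmpos : 0 < m := lt_min one_pos hεpos
    obtain ⟨n, hn⟩ := exists_nat_gt (K/(m*rr))
    have hnpos : (0:ℝ) < n := lt_of_le_of_lt (div_nonneg hK (le_of_lt (mul_pos hmpos rrpos))) hn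
    have hrn : 0 < rr * n := mul_pos rrpos hnpos
    have hexp : Real.exp (-(rr*(n:ℝ))) ≤ (rr*(n:ℝ))⁻¹ := by
      rw [Real.exp_neg]
      apply inv_anti₀ hrn
      linarith [Real.add_one_le_exp (rr*(n:ℝ))]
    have hKe : K * Real.exp (-(rr*(n:ℝ))) < m := by
      have h1 : K * Real.exp (-(rr*(n:ℝ))) ≤ K * (rr*(n:ℝ))⁻¹ :=
        mul_le_mul_of_nonneg_left hexp hK
      have h2 : K * (rr*(n:ℝ))⁻¹ < m := by
        rw [mul_inv_lt_iff₀ hrn]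
        calc K < (n:ℝ) * (m * rr) := by
              rwa [← div_lt_iff₀ (mul_pos hmpos rrpos)]
          _ = m * (rr * (n:ℝ)) := by ring
      linarith
    have hKe0 : 0 ≤ K * Real.exp (-(rr*(n:ℝ))) := mul_nonneg hK (le_of_lt (Real.exp_pos _))
    have hsq : (K * Real.exp (-(rr*(n:ℝ))))^2 < ε := by
      have hm1 : m ≤ 1 := min_le_left _ _
      have hmε : m ≤ ε := min_le_right _ _
      nlinarith
    have hEn := hval n
    have hle := hres_sq_int_le hK hb n
    have : (∫ t in Set.Ioi (0:ℝ), ((fn n t - 1) ^ 2 + (deriv (deriv (fn n)) t) ^ 2))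
        < sInf S := by
      rw [hEn]
      have : (∫ t in Set.Ioi (0:ℝ), (hres n t)^2) < ε := lt_of_le_of_lt hle hsq
      simp only [hε] at this ⊢
      linarith
    exact absurd (csInf_le hbdd (hmem n)) (not_le.mpr this)
  · exact le_csInf hne hlb
end
end

section
/- Let a < b, let (ε_j) be a sequence of positive reals converging to 0, and let v_j : ℝ → ℝ be twice continuously differentiable functions such that sup_j ∫ₐᵇ ( (v_j(t)−1)²/ε_j + ε_j³·(v_j''(t))² ) dt < ∞. Then ε_j·∫ₐᵇ |v_j'(t)| dt → 0 as j → ∞. -/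
open Filter

open intervalIntegral MeasureTheory

open intervalIntegral MeasureTheory

lemma smooth_facts {f : ℝ → ℝ} (hf : ContDiff ℝ 2 f) :
    Differentiable ℝ f ∧ Differentiable ℝ (deriv f) ∧ Continuous (deriv (deriv f)) := by
  have h2 : (2 : WithTop ℕ∞) = (1 : WithTop ℕ∞) + 1 := by norm_num
  rw [h2, contDiff_succ_iff_deriv] at hf
  obtain ⟨h1, -, h3⟩ := hf
  have h4 : (1 : WithTop ℕ∞) = (0 : WithTop ℕ∞) + 1 := by norm_num
  rw [h4, contDiff_succ_iff_deriv] at h3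
  exact ⟨h1, h3.1, h3.2.2.continuous⟩

lemma exists_abs_le_avg {w : ℝ → ℝ} (hw : Continuous w) {p q : ℝ} (hpq : p < q) :
    ∃ c ∈ Set.Icc p q, |w c| * (q - p) ≤ ∫ t in p..q, |w t| := by
  obtain ⟨c, hc, hmin⟩ := isCompact_Icc.exists_isMinOn (Set.nonempty_Icc.2 hpq.le)
    (hw.abs.continuousOn : ContinuousOn (fun t => |w t|) (Set.Icc p q))
  refine ⟨c, hc, ?_⟩
  have := integral_mono_on (f := fun _ => |w c|) (μ := volume) hpq.le
    (intervalIntegrable_const) (hw.abs.intervalIntegrable p q)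
    (fun t ht => hmin ht)
  simpa [mul_comm] using this

lemma abs_intervalIntegral_le {g : ℝ → ℝ} (hg : Continuous g) (hg0 : ∀ t, 0 ≤ g t)
    {p s ξ t : ℝ} (hξ : ξ ∈ Set.Icc p s) (ht : t ∈ Set.Icc p s) :
    |∫ u in ξ..t, g u| ≤ ∫ u in p..s, g u := by
  have hint : IntervalIntegrable g volume p s := hg.intervalIntegrable p s
  have hae : 0 ≤ᵐ[volume.restrict (Set.Ioc p s)] g :=
    Filter.Eventually.of_forall hg0
  rcases le_total ξ t with h | h
  · rw [abs_of_nonneg (intervalIntegral.integral_nonneg h (fun u _ => hg0 u))]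
    exact integral_mono_interval hξ.1 h ht.2 hae hint
  · rw [intervalIntegral.integral_symm,
      abs_neg, abs_of_nonneg (intervalIntegral.integral_nonneg h (fun u _ => hg0 u))]
    exact integral_mono_interval ht.1 h hξ.2 hae hint

lemma abs_intervalIntegral_le' {g : ℝ → ℝ} (hg : Continuous g)
    {p s ξ t : ℝ} (hξ : ξ ∈ Set.Icc p s) (ht : t ∈ Set.Icc p s) :
    |∫ u in ξ..t, g u| ≤ ∫ u in p..s, |g u| := by
  have h1 : |∫ u in ξ..t, g u| ≤ |∫ u in ξ..t, abs (g u)| := by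
    simpa [Real.norm_eq_abs] using
      (intervalIntegral.norm_integral_le_abs_integral_norm (f := g) (a := ξ) (b := t) (μ := volume))
  exact h1.trans (abs_intervalIntegral_le hg.abs (fun u => abs_nonneg _) hξ ht)

lemma block_lemma {f : ℝ → ℝ} (hf : ContDiff ℝ 2 f) {p s : ℝ} (hps : p < s) :
    ∫ t in p..s, |deriv f t| ≤
      (18 / (s - p)) * (∫ t in p..s, |f t - 1|) + (s - p) * ∫ t in p..s, |deriv (deriv f) t| := by
  obtain ⟨hdf, hdf', hcf''⟩ := smooth_facts hf
  have hcf : Continuous f := hdf.continuous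
  have hcf' : Continuous (deriv f) := hdf'.continuous
  have hcw : Continuous (fun t => f t - 1) := hcf.sub continuous_const
  set h := (s - p) / 3 with hh_def
  have hh : 0 < h := by rw [hh_def]; linarith
  have hs : s = p + 3 * h := by rw [hh_def]; ring
  set W := ∫ t in p..s, |f t - 1| with hW_def
  set V := ∫ t in p..s, |deriv (deriv f) t| with hV_def
  have hW0 : 0 ≤ W := intervalIntegral.integral_nonneg hps.le (fun t _ => abs_nonneg _)
  have hwint : IntervalIntegrable (fun t => |f t - 1|) volume p s :=
    hcw.abs.intervalIntegrable p s
  have hwae : 0 ≤ᵐ[volume.restrict (Set.Ioc p s)] (fun t => |f t - 1|) :=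
    Filter.Eventually.of_forall (fun t => abs_nonneg _)
  obtain ⟨c, hc, hcavg⟩ := exists_abs_le_avg hcw (show p < p + h by linarith)
  obtain ⟨d, hd, hdavg⟩ := exists_abs_le_avg hcw (show p + 2 * h < s by linarith)
  have hcW : |f c - 1| ≤ W / h := by
    rw [le_div_iff₀ hh]
    calc |f c - 1| * h = |f c - 1| * (p + h - p) := by ring_nf
      _ ≤ ∫ t in p..(p + h), |f t - 1| := hcavg
      _ ≤ W := integral_mono_interval le_rfl (by linarith) (by linarith) hwae hwint
  have hdW : |f d - 1| ≤ W / h := by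
    rw [le_div_iff₀ hh]
    calc |f d - 1| * h = |f d - 1| * (s - (p + 2 * h)) := by rw [hs]; ring
      _ ≤ ∫ t in (p + 2 * h)..s, |f t - 1| := hdavg
      _ ≤ W := integral_mono_interval (by linarith [hc.1]) (by linarith) le_rfl hwae hwint
  have hcd : c < d := by
    have := hc.2; have := hd.1; linarith
  have hcdh : h ≤ d - c := by
    have := hc.2; have := hd.1; linarith
  obtain ⟨ξ, hξ, hξ_eq⟩ := exists_deriv_eq_slope f hcd (hcf.continuousOn) (hdf.differentiableOn)
  have hξ' : ξ ∈ Set.Icc p s := by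
    constructor
    · have := hξ.1; have := hc.1; linarith
    · have := hξ.2; have := hd.2; linarith
  have hξ_bound : |deriv f ξ| ≤ 2 * W / h ^ 2 := by
    rw [hξ_eq, abs_div, abs_of_pos (by linarith : (0:ℝ) < d - c)]
    have h1 : |f d - f c| ≤ |f d - 1| + |f c - 1| := by
      have he : f d - f c = (f d - 1) - (f c - 1) := by ring
      rw [he]; exact abs_sub _ _
    calc |f d - f c| / (d - c) ≤ (|f d - 1| + |f c - 1|) / (d - c) :=
          div_le_div_of_nonneg_right h1 (by linarith) |>.trans_eq rfl
      _ ≤ (W / h + W / h) / h :=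
          div_le_div₀ (add_nonneg (div_nonneg hW0 hh.le) (div_nonneg hW0 hh.le))
            (by linarith [hcW, hdW]) hh hcdh
      _ = 2 * W / h ^ 2 := by field_simp; ring
  have hpt : ∀ t ∈ Set.Icc p s, |deriv f t| ≤ 2 * W / h ^ 2 + V := by
    intro t ht
    have hftc : deriv f t - deriv f ξ = ∫ u in ξ..t, deriv (deriv f) u := by
      rw [integral_deriv_eq_sub (fun x _ => hdf' x) (hcf''.intervalIntegrable ξ t)]
    have h3 : |deriv f t - deriv f ξ| ≤ V := by
      rw [hftc]; exact abs_intervalIntegral_le' hcf'' hξ' ht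
    have h2 : |deriv f t| ≤ |deriv f ξ| + |deriv f t - deriv f ξ| := by
      have := abs_add_le (deriv f ξ) (deriv f t - deriv f ξ)
      simpa using this
    linarith [hξ_bound]
  have hint : ∫ t in p..s, |deriv f t| ≤ (s - p) * (2 * W / h ^ 2 + V) := by
    have h4 := integral_mono_on (μ := volume) hps.le (hcf'.abs.intervalIntegrable p s)
      intervalIntegrable_const hpt
    rwa [intervalIntegral.integral_const, smul_eq_mul] at h4
  have final : ∫ t in p..s, |deriv f t| ≤ 18 / (s - p) * W + (s - p) * V := by
    refine hint.trans (le_of_eq ?_)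
    rw [hs]; field_simp; ring
  rw [hW_def] at final
  exact final

lemma partition_bound {f : ℝ → ℝ} (hf : ContDiff ℝ 2 f) {a b : ℝ} (hab : a < b)
    {M : ℕ} (hM : 0 < M) :
    ∫ t in a..b, |deriv f t| ≤
      (18 * M / (b - a)) * (∫ t in a..b, |f t - 1|)
        + ((b - a) / M) * ∫ t in a..b, |deriv (deriv f) t| := by
  obtain ⟨hdf, hdf', hcf''⟩ := smooth_facts hf
  have hcf' : Continuous (deriv f) := hdf'.continuous
  have hcw : Continuous (fun t => |f t - 1|) := ((hdf.continuous.sub continuous_const).abs)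
  have hMR : (0:ℝ) < M := by exact_mod_cast hM
  set H := (b - a) / M with hH_def
  have hH : 0 < H := by
    have hba : (0:ℝ) < b - a := by linarith
    rw [hH_def]; positivity
  set x : ℕ → ℝ := fun k => a + k * H with hx_def
  have hx0 : x 0 = a := by simp [hx_def]
  have hxM : x M = b := by
    simp only [hx_def, hH_def]
    field_simp
    ring
  have hxstep : ∀ k : ℕ, x (k+1) - x k = H := by
    intro k; simp only [hx_def]; push_cast; ring
  have hxlt : ∀ k : ℕ, x k < x (k+1) := fun k => by
    have := hxstep k; linarith
  have hadj : ∀ g : ℝ → ℝ, Continuous g →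
      ∑ k ∈ Finset.range M, (∫ t in x k..x (k+1), g t) = ∫ t in a..b, g t := by
    intro g hg
    rw [← hx0, ← hxM]
    exact sum_integral_adjacent_intervals (fun k _ => hg.intervalIntegrable _ _)
  have hblock : ∀ k : ℕ, (∫ t in x k..x (k+1), |deriv f t|) ≤
      (18 / H) * (∫ t in x k..x (k+1), |f t - 1|)
        + H * ∫ t in x k..x (k+1), |deriv (deriv f) t| := by
    intro k
    have := block_lemma hf (hxlt k)
    rwa [hxstep k] at this
  calc ∫ t in a..b, |deriv f t|
      = ∑ k ∈ Finset.range M, (∫ t in x k..x (k+1), |deriv f t|) :=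
        (hadj _ hcf'.abs).symm
    _ ≤ ∑ k ∈ Finset.range M, ((18 / H) * (∫ t in x k..x (k+1), |f t - 1|)
        + H * ∫ t in x k..x (k+1), |deriv (deriv f) t|) :=
        Finset.sum_le_sum (fun k _ => hblock k)
    _ = (18 / H) * (∫ t in a..b, |f t - 1|) + H * ∫ t in a..b, |deriv (deriv f) t| := by
        rw [Finset.sum_add_distrib, ← Finset.mul_sum, ← Finset.mul_sum,
          hadj _ hcw, hadj _ hcf''.abs]
    _ = (18 * M / (b - a)) * (∫ t in a..b, |f t - 1|)
        + ((b - a) / M) * ∫ t in a..b, |deriv (deriv f) t| := by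
        rw [hH_def]
        congr 1
        · congr 1
          field_simp

lemma integral_abs_le_amgm {g : ℝ → ℝ} (hg : Continuous g) {a b δ : ℝ} (hab : a ≤ b)
    (hδ : 0 < δ) :
    (∫ t in a..b, |g t|) ≤ (∫ t in a..b, g t ^ 2) / (2 * δ) + δ * (b - a) / 2 := by
  have hpt : ∀ t ∈ Set.Icc a b, |g t| ≤ g t ^ 2 / (2 * δ) + δ / 2 := by
    intro t _
    have h1 : 0 ≤ (|g t| - δ) ^ 2 := sq_nonneg _
    have h2 : |g t| ^ 2 = g t ^ 2 := sq_abs _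
    rw [div_add_div _ _ (by positivity) (by norm_num), le_div_iff₀ (by positivity)]
    nlinarith [abs_nonneg (g t)]
  have hcont : Continuous (fun t => g t ^ 2 / (2 * δ) + δ / 2) := by fun_prop
  have h3 := integral_mono_on (μ := volume) hab (hg.abs.intervalIntegrable a b)
    (hcont.intervalIntegrable a b) hpt
  have h4 : (∫ t in a..b, (g t ^ 2 / (2 * δ) + δ / 2))
      = (∫ t in a..b, g t ^ 2) / (2 * δ) + δ * (b - a) / 2 := by
    rw [intervalIntegral.integral_add (f := fun t => g t ^ 2 / (2 * δ)) (((hg.pow 2).div_const _).intervalIntegrable a b)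
      (intervalIntegrable_const), intervalIntegral.integral_div,
      intervalIntegral.integral_const, smul_eq_mul]
    ring
  rw [h4] at h3
  exact h3

lemma energy_split {g w : ℝ → ℝ} (hw : Continuous w) (hg : Continuous g)
    {a b e C : ℝ} (hab : a ≤ b) (he : 0 < e)
    (hbd : (∫ t in a..b, (w t ^ 2 / e + e ^ 3 * g t ^ 2)) ≤ C) :
    (∫ t in a..b, w t ^ 2) ≤ C * e ∧ (∫ t in a..b, g t ^ 2) ≤ C / e ^ 3 ∧ 0 ≤ C := by
  have hw2 : IntervalIntegrable (fun t => w t ^ 2 / e) volume a b :=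
    ((hw.pow 2).div_const _).intervalIntegrable a b
  have hg2 : IntervalIntegrable (fun t => e ^ 3 * g t ^ 2) volume a b :=
    (continuous_const.mul (hg.pow 2)).intervalIntegrable a b
  have hsplit : (∫ t in a..b, (w t ^ 2 / e + e ^ 3 * g t ^ 2))
      = (∫ t in a..b, w t ^ 2) / e + e ^ 3 * ∫ t in a..b, g t ^ 2 := by
    rw [intervalIntegral.integral_add hw2 hg2, intervalIntegral.integral_div,
      intervalIntegral.integral_const_mul]
  rw [hsplit] at hbd
  have hW0 : 0 ≤ ∫ t in a..b, w t ^ 2 :=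
    intervalIntegral.integral_nonneg hab (fun t _ => sq_nonneg _)
  have hG0 : 0 ≤ ∫ t in a..b, g t ^ 2 :=
    intervalIntegral.integral_nonneg hab (fun t _ => sq_nonneg _)
  have he3 : 0 < e ^ 3 := by positivity
  have h1 : 0 ≤ e ^ 3 * ∫ t in a..b, g t ^ 2 := mul_nonneg he3.le hG0
  have h2 : 0 ≤ (∫ t in a..b, w t ^ 2) / e := div_nonneg hW0 he.le
  refine ⟨?_, ?_, by linarith⟩
  · rw [← div_le_iff₀ he]; linarith
  · rw [le_div_iff₀ he3, mul_comm]
    linarith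

lemma integral_abs_le_sqrt {g : ℝ → ℝ} (hg : Continuous g) {a b P : ℝ} (hab : a < b)
    (hP : 0 < P) (hA : (∫ t in a..b, g t ^ 2) ≤ P) :
    (∫ t in a..b, |g t|) ≤ Real.sqrt (P * (b - a)) := by
  have hL : 0 < b - a := by linarith
  set L := b - a with hL_def
  set δ := Real.sqrt (P / L) with hδ_def
  have hδ : 0 < δ := Real.sqrt_pos.2 (by positivity)
  have hδ2 : δ ^ 2 = P / L := Real.sq_sqrt (by positivity)
  have hP_eq : P = δ ^ 2 * L := by rw [hδ2]; field_simp
  have h1 := integral_abs_le_amgm hg hab.le hδ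
  have h2 : (∫ t in a..b, g t ^ 2) / (2 * δ) ≤ P / (2 * δ) :=
    div_le_div_of_nonneg_right hA (by positivity)
  have key : P / (2 * δ) + δ * L / 2 = Real.sqrt (P * L) := by
    have hsq : P * L = (δ * L) ^ 2 := by rw [hP_eq]; ring
    rw [hsq, Real.sqrt_sq (by positivity), hP_eq]
    field_simp
    ring
  rw [← key]
  calc (∫ t in a..b, |g t|) ≤ (∫ t in a..b, g t ^ 2) / (2 * δ) + δ * L / 2 := h1
    _ ≤ P / (2 * δ) + δ * L / 2 := by linarith


/-- Sequences with equibounded second-order Modica–Mortola energy satisfy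
`ε_j ∫ₐᵇ |v_j'| → 0`. -/
theorem eps_deriv_tendsto_zero (a b : ℝ) (hab : a < b)
    (ε : ℕ → ℝ) (hε : ∀ j, 0 < ε j) (hε0 : Tendsto ε atTop (nhds 0))
    (v : ℕ → ℝ → ℝ) (hv : ∀ j, ContDiff ℝ 2 (v j))
    (C : ℝ)
    (hbd : ∀ j,
      (∫ t in a..b,
        ((v j t - 1) ^ 2 / ε j + (ε j) ^ 3 * (deriv (deriv (v j)) t) ^ 2)) ≤ C) :
    Tendsto (fun j => ε j * ∫ t in a..b, |deriv (v j) t|) atTop (nhds 0) := by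
  have hL : (0:ℝ) < b - a := by linarith
  set L := b - a with hL_def
  -- continuity facts
  have hcw : ∀ j, Continuous (fun t => v j t - 1) := fun j =>
    (smooth_facts (hv j)).1.continuous.sub continuous_const
  have hcf'' : ∀ j, Continuous (deriv (deriv (v j))) := fun j => (smooth_facts (hv j)).2.2
  -- energy splitting
  have hsplit : ∀ j, (∫ t in a..b, (v j t - 1) ^ 2) ≤ C * ε j ∧
      (∫ t in a..b, (deriv (deriv (v j)) t) ^ 2) ≤ C / (ε j) ^ 3 ∧ 0 ≤ C := fun j =>
    energy_split (hcw j) (hcf'' j) hab.le (hε j) (hbd j)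
  have hC0 : 0 ≤ C := (hsplit 0).2.2
  set K := Real.sqrt ((C + 1) * L) with hK_def
  have hK : 0 < K := Real.sqrt_pos.2 (by positivity)
  -- W and V bounds
  have hW : ∀ j, (∫ t in a..b, |v j t - 1|) ≤ K * Real.sqrt (ε j) := by
    intro j
    have h1 : (∫ t in a..b, (v j t - 1) ^ 2) ≤ (C + 1) * ε j := by
      have := (hsplit j).1
      nlinarith [hε j]
    have h2 := integral_abs_le_sqrt (hcw j) hab (by nlinarith [hε j] : (0:ℝ) < (C + 1) * ε j) h1
    calc (∫ t in a..b, |v j t - 1|) ≤ Real.sqrt ((C + 1) * ε j * L) := h2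
      _ = K * Real.sqrt (ε j) := by
          rw [hK_def, ← Real.sqrt_mul (by positivity)]
          ring_nf
  have hV : ∀ j, (∫ t in a..b, |deriv (deriv (v j)) t|) ≤ K / (ε j * Real.sqrt (ε j)) := by
    intro j
    have hej := hε j
    have h1 : (∫ t in a..b, (deriv (deriv (v j)) t) ^ 2) ≤ (C + 1) / (ε j) ^ 3 := by
      have := (hsplit j).2.1
      have h3 : C / (ε j) ^ 3 ≤ (C + 1) / (ε j) ^ 3 :=
        div_le_div_of_nonneg_right (by linarith) (by positivity)
      linarith
    have h2 := integral_abs_le_sqrt (hcf'' j) hab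
      (by have := hε j; positivity) h1
    have hsq3 : Real.sqrt ((ε j) ^ 3) = ε j * Real.sqrt (ε j) := by
      rw [show (ε j) ^ 3 = (ε j) ^ 2 * ε j by ring, Real.sqrt_mul (sq_nonneg _),
        Real.sqrt_sq hej.le]
    calc (∫ t in a..b, |deriv (deriv (v j)) t|) ≤ Real.sqrt ((C + 1) / (ε j) ^ 3 * L) := h2
      _ = K / (ε j * Real.sqrt (ε j)) := by
          rw [hK_def, show (C + 1) / (ε j) ^ 3 * L = ((C + 1) * L) / (ε j) ^ 3 by ring,
            Real.sqrt_div (by positivity), hsq3]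
  -- nonnegativity of the sequence
  have hf0 : ∀ j, 0 ≤ ε j * ∫ t in a..b, |deriv (v j) t| := fun j =>
    mul_nonneg (hε j).le
      (intervalIntegral.integral_nonneg hab.le (fun t _ => abs_nonneg _))
  -- key estimate for every σ > 0
  have hkey : ∀ σ : ℝ, 0 < σ → ∀ j,
      ε j * (∫ t in a..b, |deriv (v j) t|) ≤
        18 * K * ε j / σ + 18 * K * ε j * Real.sqrt (ε j) / L + σ * K := by
    intro σ hσ j
    have hej := hε j
    set e := Real.sqrt (ε j) with he_def
    have he : 0 < e := Real.sqrt_pos.2 hej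
    set M := ⌈L / (σ * e)⌉₊ with hM_def
    have hM0 : 0 < M := Nat.ceil_pos.2 (by positivity)
    have hMR : (0:ℝ) < M := by exact_mod_cast hM0
    have hMge : L / (σ * e) ≤ (M:ℝ) := Nat.le_ceil _
    have hMle : (M:ℝ) ≤ L / (σ * e) + 1 := by
      have := Nat.ceil_lt_add_one (by positivity : (0:ℝ) ≤ L / (σ * e))
      exact this.le
    have hLM : L / (M:ℝ) ≤ σ * e := by
      rw [div_le_iff₀ hMR]
      have := (div_le_iff₀ (by positivity : (0:ℝ) < σ * e)).1 hMge
      linarith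
    have hpart := partition_bound (hv j) hab hM0
    have hWj := hW j
    have hVj := hV j
    have hV0 : 0 ≤ ∫ t in a..b, |deriv (deriv (v j)) t| :=
      intervalIntegral.integral_nonneg hab.le (fun t _ => abs_nonneg _)
    have hstep : (∫ t in a..b, |deriv (v j) t|) ≤
        18 * (M:ℝ) / L * (K * e) + (σ * e) * (K / (ε j * e)) := by
      refine hpart.trans (add_le_add ?_ ?_)
      · exact mul_le_mul_of_nonneg_left hWj (by positivity)
      · exact mul_le_mul hLM hVj hV0 (by positivity)
    have hstep2 : ε j * (∫ t in a..b, |deriv (v j) t|) ≤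
        ε j * (18 * (M:ℝ) / L * (K * e) + (σ * e) * (K / (ε j * e))) :=
      mul_le_mul_of_nonneg_left hstep hej.le
    refine hstep2.trans ?_
    have he2 : ε j * (σ * e * (K / (ε j * e))) = σ * K := by
      field_simp
    have hterm1 : ε j * (18 * (M:ℝ) / L * (K * e)) ≤
        18 * K * ε j / σ + 18 * K * ε j * e / L := by
      have hfac : (0:ℝ) ≤ 18 * K * ε j * e / L := by positivity
      have h5 : 18 * K * ε j * e / L * (M:ℝ) ≤
          18 * K * ε j * e / L * (L / (σ * e) + 1) :=
        mul_le_mul_of_nonneg_left hMle hfac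
      have h6 : ε j * (18 * (M:ℝ) / L * (K * e)) = 18 * K * ε j * e / L * (M:ℝ) := by
        ring
      have h7 : 18 * K * ε j * e / L * (L / (σ * e) + 1) =
          18 * K * ε j / σ + 18 * K * ε j * e / L := by
        field_simp
      rw [h6]
      rw [h7] at h5
      exact h5
    calc ε j * (18 * (M:ℝ) / L * (K * e) + σ * e * (K / (ε j * e)))
        = ε j * (18 * (M:ℝ) / L * (K * e)) + ε j * (σ * e * (K / (ε j * e))) := by ring
      _ ≤ (18 * K * ε j / σ + 18 * K * ε j * e / L) + σ * K := by
          rw [he2]; exact add_le_add hterm1 le_rfl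
      _ = 18 * K * ε j / σ + 18 * K * ε j * e / L + σ * K := by ring
  -- conclude
  rw [Metric.tendsto_atTop]
  intro η hη
  set σ := η / (2 * (K + 1)) with hσ_def
  have hσ : 0 < σ := by positivity
  have hσK : σ * K < η / 2 := by
    rw [hσ_def, div_mul_eq_mul_div, div_lt_div_iff₀ (by positivity) (by norm_num)]
    nlinarith
  have htend : Tendsto (fun j => 18 * K * ε j / σ + 18 * K * ε j * Real.sqrt (ε j) / L)
      atTop (nhds 0) := by
    have h1 : Tendsto (fun j => Real.sqrt (ε j)) atTop (nhds 0) := by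
      have := (Real.continuous_sqrt.tendsto 0).comp hε0
      simpa [Function.comp_def] using this
    have h2 : Tendsto (fun j => 18 * K * ε j / σ) atTop (nhds 0) := by
      have := (hε0.const_mul (18 * K)).div_const σ
      simpa using this
    have h3 : Tendsto (fun j => 18 * K * ε j * Real.sqrt (ε j) / L) atTop (nhds 0) := by
      have := ((hε0.const_mul (18 * K)).mul h1).div_const L
      simpa using this
    have := h2.add h3
    simpa using this
  have hev : ∀ᶠ j in atTop,
      18 * K * ε j / σ + 18 * K * ε j * Real.sqrt (ε j) / L < η / 2 := by
    have : Set.Iio (η / 2) ∈ nhds (0:ℝ) := Iio_mem_nhds (by positivity)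
    exact htend.eventually (eventually_mem_set.2 this)
  obtain ⟨N, hN⟩ := eventually_atTop.1 hev
  refine ⟨N, fun n hn => ?_⟩
  have h8 := hkey σ hσ n
  have h9 := hN n hn
  rw [Real.dist_eq, sub_zero, abs_of_nonneg (hf0 n)]
  calc ε n * ∫ t in a..b, |deriv (v n) t|
      ≤ 18 * K * ε n / σ + 18 * K * ε n * Real.sqrt (ε n) / L + σ * K := h8
    _ < η / 2 + η / 2 := by linarith
    _ = η := by ring
end
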